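/- Fix n ≥ 2. Let s be any real-valued function on the set of pseudoknot-free foldings of length n, and for ρ ∈ [0,1] and a folding φ define V_ρ(φ) = ρ·|φ| + (1 − ρ)·s(φ). Then there exists a finite set D ⊆ [0,1] with |D| ≤ n² such that the map ρ ↦ {φ : V_ρ(φ) = max_{φ'} V_ρ(φ')} (the set of co-optimal foldings) is constant on every connected component of [0,1] ∖ D. Consequently, if A_ρ is any choice of an optimal folding for each ρ ∈ [0,1] that is constant on every region of [0,1] where the set of co-optimal foldings is constant, then for any real-valued function u on foldings, the map ρ ↦ u(A_ρ) is piecewise constant on [0,1] with at most n² discontinuities. -/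

import Mathlib

/-- A pseudoknot-free folding of length `n`: a set of pairs `(i, j)` with `1 ≤ i < j ≤ n`,
every index occurring in at most one pair, and no crossing pairs. -/
def IsFolding (n : ℕ) (φ : Finset (ℕ × ℕ)) : Prop :=
  (∀ p ∈ φ, 1 ≤ p.1 ∧ p.1 < p.2 ∧ p.2 ≤ n) ∧
  (∀ p ∈ φ, ∀ q ∈ φ, p ≠ q → p.1 ≠ q.1 ∧ p.1 ≠ q.2 ∧ p.2 ≠ q.1 ∧ p.2 ≠ q.2) ∧
  (∀ p ∈ φ, ∀ q ∈ φ, ¬ (p.1 < q.1 ∧ q.1 < p.2 ∧ p.2 < q.2))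

/-- The type of pseudoknot-free foldings of length `n`. -/
def Fold (n : ℕ) := {φ : Finset (ℕ × ℕ) // IsFolding n φ}

/-- The parameterized objective `V_ρ(φ) = ρ·|φ| + (1 − ρ)·s(φ)`. -/
noncomputable def Vval {n : ℕ} (s : Fold n → ℝ) (ρ : ℝ) (φ : Fold n) : ℝ :=
  ρ * (φ.1.card : ℝ) + (1 - ρ) * s φ

lemma isFolding_subset {n : ℕ} {φ : Finset (ℕ × ℕ)} (h : IsFolding n φ) :
    φ ⊆ Finset.Icc 1 n ×ˢ Finset.Icc 1 n := by
  intro p hp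
  obtain ⟨h1, h2, h3⟩ := h.1 p hp
  simp only [Finset.mem_product, Finset.mem_Icc]
  omega

instance foldFinite (n : ℕ) : Finite (Fold n) := by
  have hsub : {φ : Finset (ℕ × ℕ) | IsFolding n φ} ⊆
      ↑((Finset.Icc 1 n ×ˢ Finset.Icc 1 n).powerset) := by
    intro φ hφ
    simp only [Finset.coe_powerset, Set.mem_preimage, Set.mem_powerset_iff, Finset.coe_subset]
    exact isFolding_subset hφ
  exact (Set.Finite.subset (Finset.finite_toSet _) hsub).to_subtype

noncomputable instance foldFintype (n : ℕ) : Fintype (Fold n) := Fintype.ofFinite _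

instance foldNonempty (n : ℕ) : Nonempty (Fold n) :=
  ⟨⟨∅, by refine ⟨?_, ?_, ?_⟩ <;> simp⟩⟩

lemma fold_card_le {n : ℕ} (φ : Fold n) : φ.1.card ≤ n - 1 := by
  classical
  have hinj : Set.InjOn Prod.fst (↑φ.1 : Set (ℕ × ℕ)) := by
    intro p hp q hq hpq
    by_contra hne
    exact (φ.2.2.1 p hp q hq hne).1 hpq
  have him : φ.1.image Prod.fst ⊆ Finset.Icc 1 (n - 1) := by
    intro x hx
    simp only [Finset.mem_image] at hx
    obtain ⟨p, hp, rfl⟩ := hx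
    have := φ.2.1 p hp
    simp only [Finset.mem_Icc]
    omega
  calc φ.1.card = (φ.1.image Prod.fst).card := (Finset.card_image_of_injOn hinj).symm
    _ ≤ (Finset.Icc 1 (n - 1)).card := Finset.card_le_card him
    _ = n - 1 := by rw [Nat.card_Icc]; omega

/-- for any score function `s` on pseudoknot-free foldings of length `n ≥ 2`,
there is a finite `D ⊆ [0,1]` with `|D| ≤ n²` such that the set of co-optimal foldings of
`V_ρ` is constant on every connected component of `[0,1] ∖ D`; consequently, for any
optimal-folding selection `A` that is constant wherever the co-optimal set is constant,
and any utility `u` on foldings, `ρ ↦ u(A_ρ)` is piecewise constant on `[0,1]` with at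
most `n²` discontinuities. -/
theorem stmt_10 (n : ℕ) (hn : 2 ≤ n) (s : Fold n → ℝ) :
    (∃ D : Finset ℝ, (↑D : Set ℝ) ⊆ Set.Icc (0 : ℝ) 1 ∧ D.card ≤ n ^ 2 ∧
      ∀ ρ₁ ∈ Set.Icc (0 : ℝ) 1, ∀ ρ₂ ∈ Set.Icc (0 : ℝ) 1, ρ₁ ≤ ρ₂ →
        (∀ d ∈ D, ¬ (ρ₁ ≤ d ∧ d ≤ ρ₂)) →
        ∀ φ : Fold n,
          ((∀ φ', Vval s ρ₁ φ' ≤ Vval s ρ₁ φ) ↔ (∀ φ', Vval s ρ₂ φ' ≤ Vval s ρ₂ φ))) ∧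
    (∀ A : ℝ → Fold n,
      (∀ ρ ∈ Set.Icc (0 : ℝ) 1, ∀ φ', Vval s ρ φ' ≤ Vval s ρ (A ρ)) →
      (∀ ρ₁ ∈ Set.Icc (0 : ℝ) 1, ∀ ρ₂ ∈ Set.Icc (0 : ℝ) 1,
        (∀ φ : Fold n, (∀ φ', Vval s ρ₁ φ' ≤ Vval s ρ₁ φ) ↔
          (∀ φ', Vval s ρ₂ φ' ≤ Vval s ρ₂ φ)) → A ρ₁ = A ρ₂) →
      ∀ u : Fold n → ℝ,
        ∃ D : Finset ℝ, (↑D : Set ℝ) ⊆ Set.Icc (0 : ℝ) 1 ∧ D.card ≤ n ^ 2 ∧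
          ∀ ρ₁ ∈ Set.Icc (0 : ℝ) 1, ∀ ρ₂ ∈ Set.Icc (0 : ℝ) 1, ρ₁ ≤ ρ₂ →
            (∀ d ∈ D, ¬ (ρ₁ ≤ d ∧ d ≤ ρ₂)) → u (A ρ₁) = u (A ρ₂)) := by
  classical
  have key : ∃ D : Finset ℝ, (↑D : Set ℝ) ⊆ Set.Icc (0 : ℝ) 1 ∧ D.card ≤ n ^ 2 ∧
      ∀ ρ₁ ∈ Set.Icc (0 : ℝ) 1, ∀ ρ₂ ∈ Set.Icc (0 : ℝ) 1, ρ₁ ≤ ρ₂ →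
        (∀ d ∈ D, ¬ (ρ₁ ≤ d ∧ d ≤ ρ₂)) →
        ∀ φ : Fold n,
          ((∀ φ', Vval s ρ₁ φ' ≤ Vval s ρ₁ φ) ↔ (∀ φ', Vval s ρ₂ φ' ≤ Vval s ρ₂ φ)) := by
    set C : Finset ℕ := Finset.image (fun φ : Fold n => φ.1.card) Finset.univ with hC
    set g : ℕ → ℝ := fun c => sSup (s '' {φ : Fold n | φ.1.card = c}) with hg
    set f : ℕ × ℕ → ℝ :=
      fun p => (g p.1 - g p.2) / -((((p.1 : ℕ) : ℝ) - g p.1) - (((p.2 : ℕ) : ℝ) - g p.2))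
      with hf
    set D : Finset ℝ :=
      insert (1 : ℝ) ((C.offDiag.image f).filter (fun x => x ∈ Set.Icc (0 : ℝ) 1)) with hD
    -- witnesses
    have hwit : ∀ c ∈ C, ∃ ψ : Fold n, ψ.1.card = c ∧ s ψ = g c := by
      intro c hc
      rw [hC, Finset.mem_image] at hc
      obtain ⟨φ0, -, rfl⟩ := hc
      have hne : (s '' {ψ : Fold n | ψ.1.card = φ0.1.card}).Nonempty := ⟨s φ0, φ0, rfl, rfl⟩
      have hfin : (s '' {ψ : Fold n | ψ.1.card = φ0.1.card}).Finite := Set.Finite.image s (Set.toFinite _)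
      obtain ⟨ψ, hψ, hs⟩ := hne.csSup_mem hfin
      exact ⟨ψ, hψ, by rw [hg]; exact hs⟩
    have hle : ∀ ψ : Fold n, s ψ ≤ g ψ.1.card := by
      intro ψ
      rw [hg]
      exact le_csSup (Set.Finite.bddAbove (Set.Finite.image s (Set.toFinite _))) ⟨ψ, rfl, rfl⟩
    have hmemC : ∀ ψ : Fold n, ψ.1.card ∈ C := fun ψ => by
      rw [hC]; exact Finset.mem_image_of_mem _ (Finset.mem_univ ψ)
    -- characterization of optimality at ρ < 1
    have char : ∀ ρ : ℝ, 0 ≤ ρ → ρ < 1 → ∀ φ : Fold n,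
        (∀ ψ, Vval s ρ ψ ≤ Vval s ρ φ) ↔
          (s φ = g φ.1.card ∧ ∀ c ∈ C,
            ρ * (c : ℝ) + (1 - ρ) * g c ≤ ρ * (φ.1.card : ℝ) + (1 - ρ) * g φ.1.card) := by
      intro ρ h0 h1 φ
      have h1ρ : (0:ℝ) < 1 - ρ := by linarith
      constructor
      · intro hopt
        obtain ⟨ψ0, hc0, hs0⟩ := hwit _ (hmemC φ)
        have h0' := hopt ψ0
        simp only [Vval] at h0'
        rw [hc0, hs0] at h0'
        have hgle : g φ.1.card ≤ s φ :=
          (mul_le_mul_iff_right₀ h1ρ).mp (by linarith)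
        have hseq : s φ = g φ.1.card := le_antisymm (hle φ) hgle
        refine ⟨hseq, fun c hc => ?_⟩
        obtain ⟨ψ, hcψ, hsψ⟩ := hwit c hc
        have h2 := hopt ψ
        simp only [Vval] at h2
        rw [hcψ, hsψ, hseq] at h2
        exact h2
      · rintro ⟨hs, hTl⟩ ψ
        have h1' := hle ψ
        have h2 := hTl ψ.1.card (hmemC ψ)
        have h3 := mul_le_mul_of_nonneg_left h1' (le_of_lt h1ρ)
        simp only [Vval]
        rw [hs]
        linarith
    -- no line crossing inside an interval avoiding D
    have cross : ∀ ρ₁ ρ₂ : ℝ, 0 ≤ ρ₁ → ρ₂ ≤ 1 → ρ₁ ≤ ρ₂ →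
        (∀ d ∈ D, ¬ (ρ₁ ≤ d ∧ d ≤ ρ₂)) →
        ∀ c ∈ C, ∀ c' ∈ C,
        ρ₁ * (c' : ℝ) + (1 - ρ₁) * g c' ≤ ρ₁ * (c : ℝ) + (1 - ρ₁) * g c →
        ρ₂ * (c : ℝ) + (1 - ρ₂) * g c ≤ ρ₂ * (c' : ℝ) + (1 - ρ₂) * g c' →
        (ρ₁ * (c' : ℝ) + (1 - ρ₁) * g c' < ρ₁ * (c : ℝ) + (1 - ρ₁) * g c ∨
         ρ₂ * (c : ℝ) + (1 - ρ₂) * g c < ρ₂ * (c' : ℝ) + (1 - ρ₂) * g c') → False := by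
      intro ρ₁ ρ₂ h0 h1 hle12 hav c hc c' hc' hA hB hstrict
      have hcc' : c ≠ c' := by
        rintro rfl
        rcases hstrict with h | h <;> exact absurd h (lt_irrefl _)
      set a : ℝ := g c - g c' with ha
      set b : ℝ := ((c : ℝ) - g c) - ((c' : ℝ) - g c') with hb
      have eA : 0 ≤ a + ρ₁ * b := by rw [ha, hb]; nlinarith [hA]
      have eB : a + ρ₂ * b ≤ 0 := by rw [ha, hb]; nlinarith [hB]
      have eS : 0 < a + ρ₁ * b ∨ a + ρ₂ * b < 0 := by
        rcases hstrict with h | h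
        · left; rw [ha, hb]; nlinarith [h]
        · right; rw [ha, hb]; nlinarith [h]
      have hbneg : b < 0 := by
        by_contra hb0
        push_neg at hb0
        rcases eS with h | h <;> nlinarith
      have hbpos : (0:ℝ) < -b := by linarith
      have hρ1 : ρ₁ ≤ a / (-b) := by
        rw [le_div_iff₀ hbpos]; nlinarith [eA]
      have hρ2 : a / (-b) ≤ ρ₂ := by
        rw [div_le_iff₀ hbpos]; nlinarith [eB]
      have hfd : f (c, c') = a / (-b) := by
        rw [hf, ha, hb]
      have hmem : a / (-b) ∈ D := by
        rw [hD]
        apply Finset.mem_insert_of_mem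
        rw [Finset.mem_filter]
        refine ⟨Finset.mem_image.2 ⟨(c, c'), Finset.mem_offDiag.2 ⟨hc, hc', hcc'⟩, hfd⟩, ?_⟩
        exact ⟨le_trans h0 hρ1, le_trans hρ2 h1⟩
      exact hav _ hmem ⟨hρ1, hρ2⟩
    -- cardinality bound
    have hCcard : C.card ≤ n := by
      have hsub : C ⊆ Finset.range n := by
        intro c hc
        rw [hC, Finset.mem_image] at hc
        obtain ⟨φ, -, rfl⟩ := hc
        rw [Finset.mem_range]
        have := fold_card_le φ
        omega
      calc C.card ≤ (Finset.range n).card := Finset.card_le_card hsub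
        _ = n := Finset.card_range n
    have h5 : C.card * C.card - C.card + 1 ≤ n ^ 2 := by
      rcases Nat.eq_zero_or_pos C.card with h0 | hpos
      · rw [h0]; simp; nlinarith
      · have h6 : C.card ≤ C.card * C.card := Nat.le_mul_of_pos_left _ hpos
        have h7 : C.card * C.card ≤ n * n := Nat.mul_le_mul hCcard hCcard
        calc C.card * C.card - C.card + 1
            ≤ C.card * C.card - C.card + C.card := Nat.add_le_add_left hpos _
          _ = C.card * C.card := Nat.sub_add_cancel h6
          _ ≤ n * n := h7
          _ = n ^ 2 := (pow_two n).symm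
    have hcard : D.card ≤ n ^ 2 := by
      rw [hD]
      calc (insert (1:ℝ) ((C.offDiag.image f).filter (fun x => x ∈ Set.Icc (0:ℝ) 1))).card
          ≤ ((C.offDiag.image f).filter (fun x => x ∈ Set.Icc (0:ℝ) 1)).card + 1 :=
            Finset.card_insert_le _ _
        _ ≤ (C.offDiag.image f).card + 1 := Nat.add_le_add_right (Finset.card_filter_le _ _) 1
        _ ≤ C.offDiag.card + 1 := Nat.add_le_add_right Finset.card_image_le 1
        _ = C.card * C.card - C.card + 1 := by rw [Finset.offDiag_card]
        _ ≤ n ^ 2 := h5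
    refine ⟨D, ?_, hcard, ?_⟩
    · intro x hx
      rw [Finset.mem_coe, hD, Finset.mem_insert, Finset.mem_filter] at hx
      rcases hx with rfl | ⟨-, h⟩
      · exact ⟨zero_le_one, le_refl 1⟩
      · exact h
    · intro ρ₁ hρ₁ ρ₂ hρ₂ hle12 hav φ
      have h1D : (1:ℝ) ∈ D := by rw [hD]; exact Finset.mem_insert_self _ _
      have hρ2lt : ρ₂ < 1 := by
        by_contra h
        push_neg at h
        exact hav 1 h1D ⟨hρ₁.2, h⟩
      have hρ1lt : ρ₁ < 1 := lt_of_le_of_lt hle12 hρ2lt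
      rw [char ρ₁ hρ₁.1 hρ1lt φ, char ρ₂ hρ₂.1 hρ2lt φ]
      constructor
      · rintro ⟨hs, hTl⟩
        refine ⟨hs, fun c' hc' => ?_⟩
        by_contra hlt
        push_neg at hlt
        exact cross ρ₁ ρ₂ hρ₁.1 hρ₂.2 hle12 hav φ.1.card (hmemC φ) c' hc'
          (hTl c' hc') (le_of_lt hlt) (Or.inr hlt)
      · rintro ⟨hs, hTl⟩
        refine ⟨hs, fun c' hc' => ?_⟩
        by_contra hlt
        push_neg at hlt
        exact cross ρ₁ ρ₂ hρ₁.1 hρ₂.2 hle12 hav c' hc' φ.1.card (hmemC φ)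
          (le_of_lt hlt) (hTl c' hc') (Or.inl hlt)
  refine ⟨key, ?_⟩
  intro A hopt hconst u
  obtain ⟨D, h1, h2, h3⟩ := key
  exact ⟨D, h1, h2, fun ρ₁ hρ₁ ρ₂ hρ₂ hle havoid =>
    congrArg u (hconst ρ₁ hρ₁ ρ₂ hρ₂ (fun φ => h3 ρ₁ hρ₁ ρ₂ hρ₂ hle havoid φ))⟩
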